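/- arXiv:1904.07140 — 2 statements merged into one kernel-verified Lean document; each statement's English description precedes it below -/
import Mathlib

section
/- Let m(z) satisfy 1 + z·m(z) + m(z)² = 0 with Im m(z)·Im z > 0. Then for z = E + iη ∈ S, |m′(z)| is comparable to 1/√(κ_E + η), where κ_E = min{|2−E|, |2+E|}; i.e. there are absolute constants c, C > 0 with c/√(κ_E+η) ≤ |m′(z)| ≤ C/√(κ_E+η). -/
open Complex

lemma stmt1_aux_low (E η : ℝ) (hE : |E| ≤ 4) (hη : 0 < η) (hη4 : η ≤ 4) :
    (min |2 - E| |2 + E| + η) ^ 2 ≤ ((E - 2) ^ 2 + η ^ 2) * ((E + 2) ^ 2 + η ^ 2) := by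
  have hA0 : (0:ℝ) ≤ (E - 2) ^ 2 + η ^ 2 := by positivity
  have hB0 : (0:ℝ) ≤ (E + 2) ^ 2 + η ^ 2 := by positivity
  have habs4 : |2 - E| + |2 + E| ≥ 4 := by
    have h8 : (4:ℝ) = |(2 - E) + (2 + E)| := by norm_num
    rw [ge_iff_le, h8]
    exact abs_add_le _ _
  rcases le_total |2 - E| |2 + E| with h | h
  · rw [min_eq_left h]
    have hBig : 2 ≤ |2 + E| := by linarith
    have hsq1 : |2 - E| ^ 2 = (E - 2) ^ 2 := by rw [_root_.sq_abs]; ring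
    have hκ0 : 0 ≤ |2 - E| := abs_nonneg _
    have hB4 : 4 ≤ (E + 2) ^ 2 + η ^ 2 := by
      nlinarith [_root_.sq_abs (2 + E), sq_nonneg η]
    have h4A : (|2 - E| + η) ^ 2 ≤ 4 * ((E - 2) ^ 2 + η ^ 2) := by
      nlinarith [sq_nonneg (|2 - E| - η), mul_nonneg hκ0 hη.le]
    calc (|2 - E| + η) ^ 2 ≤ 4 * ((E - 2) ^ 2 + η ^ 2) := h4A
      _ ≤ ((E - 2) ^ 2 + η ^ 2) * ((E + 2) ^ 2 + η ^ 2) := by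
          nlinarith [mul_le_mul_of_nonneg_left hB4 hA0]
  · rw [min_eq_right h]
    have hBig : 2 ≤ |2 - E| := by linarith
    have hsq1 : |2 + E| ^ 2 = (E + 2) ^ 2 := by rw [_root_.sq_abs]; ring
    have hκ0 : 0 ≤ |2 + E| := abs_nonneg _
    have hB4 : 4 ≤ (E - 2) ^ 2 + η ^ 2 := by
      nlinarith [_root_.sq_abs (2 - E), sq_nonneg η]
    have h4A : (|2 + E| + η) ^ 2 ≤ 4 * ((E + 2) ^ 2 + η ^ 2) := by
      nlinarith [sq_nonneg (|2 + E| - η), mul_nonneg hκ0 hη.le]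
    calc (|2 + E| + η) ^ 2 ≤ 4 * ((E + 2) ^ 2 + η ^ 2) := h4A
      _ ≤ ((E - 2) ^ 2 + η ^ 2) * ((E + 2) ^ 2 + η ^ 2) := by
          nlinarith [mul_le_mul_of_nonneg_left hB4 hB0]

lemma stmt1_aux_high (E η : ℝ) (hE : |E| ≤ 4) (hη : 0 < η) (hη4 : η ≤ 4) :
    ((E - 2) ^ 2 + η ^ 2) * ((E + 2) ^ 2 + η ^ 2) ≤ 64 * (min |2 - E| |2 + E| + η) ^ 2 := by
  have hA0 : (0:ℝ) ≤ (E - 2) ^ 2 + η ^ 2 := by positivity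
  have hB0 : (0:ℝ) ≤ (E + 2) ^ 2 + η ^ 2 := by positivity
  have hE1 : -4 ≤ E := neg_le_of_abs_le hE
  have hE2 : E ≤ 4 := le_of_abs_le hE
  rcases le_total |2 - E| |2 + E| with h | h
  · rw [min_eq_left h]
    have hsq1 : |2 - E| ^ 2 = (E - 2) ^ 2 := by rw [_root_.sq_abs]; ring
    have hκ0 : 0 ≤ |2 - E| := abs_nonneg _
    have hB52 : (E + 2) ^ 2 + η ^ 2 ≤ 52 := by nlinarith
    have hAs : (E - 2) ^ 2 + η ^ 2 ≤ (|2 - E| + η) ^ 2 := by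
      nlinarith [mul_nonneg hκ0 hη.le]
    calc ((E - 2) ^ 2 + η ^ 2) * ((E + 2) ^ 2 + η ^ 2)
        ≤ ((E - 2) ^ 2 + η ^ 2) * 52 := mul_le_mul_of_nonneg_left hB52 hA0
      _ ≤ 64 * (|2 - E| + η) ^ 2 := by nlinarith [sq_nonneg (|2 - E| + η)]
  · rw [min_eq_right h]
    have hsq1 : |2 + E| ^ 2 = (E + 2) ^ 2 := by rw [_root_.sq_abs]; ring
    have hκ0 : 0 ≤ |2 + E| := abs_nonneg _
    have hB52 : (E - 2) ^ 2 + η ^ 2 ≤ 52 := by nlinarith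
    have hAs : (E + 2) ^ 2 + η ^ 2 ≤ (|2 + E| + η) ^ 2 := by
      nlinarith [mul_nonneg hκ0 hη.le]
    calc ((E - 2) ^ 2 + η ^ 2) * ((E + 2) ^ 2 + η ^ 2)
        ≤ 52 * ((E + 2) ^ 2 + η ^ 2) := mul_le_mul_of_nonneg_right hB52 hB0
      _ ≤ 64 * (|2 + E| + η) ^ 2 := by nlinarith [sq_nonneg (|2 + E| + η)]

/-- `|m′(z)| ≍ 1/√(κ_E + η)` on `S`, where `κ_E = min{|2−E|,|2+E|}`. -/
theorem stmt_1 (m m' : ℂ → ℂ)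
    (hm : ∀ z : ℂ, z.im ≠ 0 →
      1 + z * m z + (m z) ^ 2 = 0 ∧ 0 < (m z).im * z.im ∧ HasDerivAt m (m' z) z) :
    ∃ c C : ℝ, 0 < c ∧ 0 < C ∧ ∀ E η : ℝ, |E| ≤ 4 → 0 < η → η ≤ 4 →
      c / Real.sqrt (min |2 - E| |2 + E| + η) ≤ ‖m' (E + η * I)‖ ∧
      ‖m' (E + η * I)‖ ≤ C / Real.sqrt (min |2 - E| |2 + E| + η) := by
  refine ⟨1/51, 9, by norm_num, by norm_num, ?_⟩
  intro E η hE hη hη4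
  set z : ℂ := (E : ℂ) + (η : ℂ) * I with hz
  have hzre : z.re = E := by simp [hz]
  have hzim : z.im = η := by simp [hz]
  have hzne : z.im ≠ 0 := by rw [hzim]; exact ne_of_gt hη
  obtain ⟨h1, him, hd⟩ := hm z hzne
  -- derivative identity
  have hopen : IsOpen {w : ℂ | 0 < w.im} := isOpen_lt continuous_const Complex.continuous_im
  have hmem : z ∈ {w : ℂ | 0 < w.im} := by simpa [Set.mem_setOf_eq, hzim] using hη
  have hF : HasDerivAt (fun w => 1 + w * m w + (m w) ^ 2)
      (m z + z * m' z + 2 * m z * m' z) z := by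
    have h1' : HasDerivAt (fun w : ℂ => w) 1 z := hasDerivAt_id z
    have h2 : HasDerivAt (fun w => 1 + w * m w + (m w) ^ 2)
        (0 + (1 * m z + z * m' z) + ((2:ℕ):ℂ) * m z ^ (2 - 1) * m' z) z :=
      ((hasDerivAt_const z (1:ℂ)).add (h1'.mul hd)).add (hd.pow 2)
    convert h2 using 1
    push_cast
    ring
  have hF0 : HasDerivAt (fun w => 1 + w * m w + (m w) ^ 2) 0 z := by
    have hev : (fun w => 1 + w * m w + (m w) ^ 2) =ᶠ[nhds z] (fun _ => (0:ℂ)) := by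
      filter_upwards [hopen.mem_nhds hmem] with w hw
      exact (hm w (ne_of_gt hw)).1
    exact (hasDerivAt_const z (0:ℂ)).congr_of_eventuallyEq hev
  have hkey : m z + z * m' z + 2 * m z * m' z = 0 := hF.unique hF0
  have hsq : (z + 2 * m z) ^ 2 = z ^ 2 - 4 := by linear_combination 4 * h1
  have hne : z + 2 * m z ≠ 0 := by
    intro h
    have h4 : z ^ 2 = 4 := by
      have h5 := hsq
      rw [h] at h5
      linear_combination -h5
    have h2 : (z - 2) * (z + 2) = 0 := by linear_combination h4
    rcases mul_eq_zero.1 h2 with h3 | h3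
    · have := congrArg Complex.im h3
      simp [hzim] at this
      exact hη.ne' this
    · have := congrArg Complex.im h3
      simp [hzim] at this
      exact hη.ne' this
  have hm' : m' z = -m z / (z + 2 * m z) := by
    rw [eq_div_iff hne]
    linear_combination hkey
  -- abs bounds
  set a : ℝ := ‖m z‖ with ha
  set t : ℝ := ‖z + 2 * m z‖ with ht
  have ha0 : 0 ≤ a := norm_nonneg _
  have ht0' : 0 ≤ t := norm_nonneg _
  have hr : ‖z‖ ≤ 8 := by
    calc ‖z‖ ≤ ‖(E : ℂ)‖ + ‖(η : ℂ) * I‖ :=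
          norm_add_le _ _
      _ = |E| + |η| := by simp [Complex.norm_real]
      _ ≤ 4 + 4 := by
          have h9 : |η| = η := abs_of_pos hη
          rw [h9]; exact add_le_add hE hη4
      _ = 8 := by norm_num
  have haup : a ≤ 9 := by
    have hsq2 : (m z) ^ 2 = -(1 + z * m z) := by linear_combination h1
    have h10 : a ^ 2 ≤ 1 + 8 * a := by
      have h5 : a ^ 2 = ‖1 + z * m z‖ := by
        rw [ha, ← norm_pow, hsq2, norm_neg]
      rw [h5]
      calc ‖1 + z * m z‖ ≤ ‖(1:ℂ)‖ + ‖z * m z‖ :=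
            norm_add_le _ _
        _ = 1 + ‖z‖ * a := by rw [norm_one, norm_mul]
        _ ≤ 1 + 8 * a := by nlinarith
    nlinarith [sq_nonneg (a - 9)]
  have halow : 1/17 ≤ a := by
    have hprod : m z * (m z + z) = -1 := by linear_combination h1
    have h6 : a * ‖m z + z‖ = 1 := by
      rw [ha, ← norm_mul, hprod]
      simp
    have h7 : ‖m z + z‖ ≤ 17 := by
      calc ‖m z + z‖ ≤ a + ‖z‖ := norm_add_le _ _
        _ ≤ 9 + 8 := add_le_add haup hr
        _ = 17 := by norm_num
    nlinarith
  -- |z+2m|^2 = |z-2||z+2|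
  have hA : ‖z - 2‖ ^ 2 = (E - 2) ^ 2 + η ^ 2 := by
    rw [Complex.sq_norm, Complex.normSq_apply]
    simp [hzre, hzim]
    ring
  have hB : ‖z + 2‖ ^ 2 = (E + 2) ^ 2 + η ^ 2 := by
    rw [Complex.sq_norm, Complex.normSq_apply]
    simp [hzre, hzim]
    ring
  have ht2 : t ^ 2 = ‖z - 2‖ * ‖z + 2‖ := by
    rw [ht, ← norm_pow, hsq]
    rw [show z ^ 2 - 4 = (z - 2) * (z + 2) by ring, norm_mul]
  have ht4 : (t ^ 2) ^ 2 = ((E - 2) ^ 2 + η ^ 2) * ((E + 2) ^ 2 + η ^ 2) := by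
    rw [ht2, mul_pow, hA, hB]
  set s : ℝ := min |2 - E| |2 + E| + η with hsdef
  have hκ0 : 0 ≤ min |2 - E| |2 + E| := le_min (abs_nonneg _) (abs_nonneg _)
  have hs : 0 < s := add_pos_of_nonneg_of_pos hκ0 hη
  have hlow : s ^ 2 ≤ (t ^ 2) ^ 2 := by
    rw [ht4]; exact stmt1_aux_low E η hE hη hη4
  have hhigh : (t ^ 2) ^ 2 ≤ 64 * s ^ 2 := by
    rw [ht4]; exact stmt1_aux_high E η hE hη hη4
  have ht2low : s ≤ t ^ 2 := by
    have := Real.sqrt_le_sqrt hlow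
    rwa [Real.sqrt_sq hs.le, Real.sqrt_sq (sq_nonneg t)] at this
  have ht2high : t ^ 2 ≤ 8 * s := by
    have h11 : (t ^ 2) ^ 2 ≤ (8 * s) ^ 2 := by nlinarith [hhigh, hs]
    have := Real.sqrt_le_sqrt h11
    rwa [Real.sqrt_sq (sq_nonneg t), Real.sqrt_sq (by positivity : (0:ℝ) ≤ 8 * s)] at this
  have htpos : 0 < t := by
    rcases ht0'.lt_or_eq with h | h
    · exact h
    · exfalso; rw [← h] at ht2low; simp at ht2low; linarith
  have hsqrt0 : 0 < Real.sqrt s := Real.sqrt_pos.2 hs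
  have htlow : Real.sqrt s ≤ t := by
    have := Real.sqrt_le_sqrt ht2low
    rwa [Real.sqrt_sq ht0'] at this
  have hthigh : t ≤ 3 * Real.sqrt s := by
    have h12 : t ^ 2 ≤ 9 * s := by linarith
    have h13 := Real.sqrt_le_sqrt h12
    rw [Real.sqrt_sq ht0'] at h13
    have h14 : Real.sqrt (9 * s) = 3 * Real.sqrt s := by
      rw [show (9:ℝ) = 3 ^ 2 by norm_num, Real.sqrt_mul (by positivity),
        Real.sqrt_sq (by norm_num : (0:ℝ) ≤ 3)]
    rwa [h14] at h13
  have habsm' : ‖m' z‖ = a / t := by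
    rw [hm', norm_div, norm_neg]
  rw [habsm']
  constructor
  · have h15 : (1/51 : ℝ) / Real.sqrt s = (1/17) / (3 * Real.sqrt s) := by
      rw [div_eq_div_iff hsqrt0.ne' (by positivity)]
      ring
    rw [h15]
    exact div_le_div₀ ha0 halow htpos hthigh
  · exact div_le_div₀ (by norm_num) haup hsqrt0 htlow
end

section
/- Let h be a real random variable with E h = 0, E h² ≤ C₂/N, and E|h|^k ≤ C_k/(N q^{k−2}) for all k ≥ 3, where q = N^β with 0 < β < 1/2. Then the k-th cumulant of h satisfies |𝒞_k(h)| ≤ C′_k/(N q^{k−2}) for every k ≥ 2, where C′_k depends only on C₂,…,C_k. -/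
open MeasureTheory

/-- cumulant bounds for sparse entries. If `E h = 0`, `E h² ≤ C₂/N` and
`E|h|^k ≤ C_k/(N q^{k−2})` for `k ≥ 3` with `q = N^β`, `0 < β < 1/2`, then the `k`-th
cumulant (defined through the moment–cumulant recursion) satisfies
`|𝒞_k(h)| ≤ C′_k/(N q^{k−2})`, with `C′_k` depending only on `C₂,…,C_k`. -/
theorem stmt_8 (k : ℕ) (hk : 2 ≤ k) (C : ℕ → ℝ) :
    ∃ C' : ℝ, 0 < C' ∧
      ∀ (Ω : Type) (_ : MeasurableSpace Ω) (μ : Measure Ω), IsProbabilityMeasure μ →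
      ∀ (h : Ω → ℝ), Measurable h →
      ∀ (N : ℕ) (β q : ℝ), 0 < N → 0 < β → β < 1 / 2 → q = (N : ℝ) ^ β →
      (∀ m : ℕ, Integrable (fun ω => |h ω| ^ m) μ) →
      (∫ ω, h ω ∂μ) = 0 →
      (∫ ω, (h ω) ^ 2 ∂μ) ≤ C 2 / N →
      (∀ m : ℕ, 3 ≤ m → (∫ ω, |h ω| ^ m ∂μ) ≤ C m / (N * q ^ (m - 2))) →
      ∀ κ : ℕ → ℝ,
        (∀ n : ℕ, (∫ ω, (h ω) ^ (n + 1) ∂μ)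
            = ∑ j ∈ Finset.range (n + 1),
                (n.choose j : ℝ) * κ (j + 1) * ∫ ω, (h ω) ^ (n - j) ∂μ) →
        |κ k| ≤ C' / (N * q ^ (k - 2)) := by
  classical
  set B : ℝ := 1 + ∑ m ∈ Finset.range (k + 1), |C m| with hBdef
  have hsum0 : 0 ≤ ∑ m ∈ Finset.range (k + 1), |C m| :=
    Finset.sum_nonneg fun i _ => abs_nonneg _
  have hB1 : 1 ≤ B := by simp only [hBdef]; linarith
  have hB0 : 0 < B := lt_of_lt_of_le one_pos hB1
  have hCB : ∀ m, m ≤ k → C m ≤ B := by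
    intro m hm
    have h1 : |C m| ≤ ∑ i ∈ Finset.range (k + 1), |C i| :=
      Finset.single_le_sum (f := fun i => |C i|) (fun i _ => abs_nonneg _)
        (Finset.mem_range.mpr (by omega))
    calc C m ≤ |C m| := le_abs_self _
      _ ≤ ∑ i ∈ Finset.range (k + 1), |C i| := h1
      _ ≤ B := by simp only [hBdef]; linarith
  set A : ℝ := 2 ^ k * (B + 1) with hAdef
  have h2kA : (2 : ℝ) ^ k ≤ A := by
    rw [hAdef]
    nlinarith [pow_pos (by norm_num : (0:ℝ) < 2) k]
  have hA1 : 1 ≤ A := le_trans (one_le_pow₀ (by norm_num)) h2kA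
  have hA0 : 0 < A := lt_of_lt_of_le one_pos hA1
  have hBA : B ≤ A := by
    rw [hAdef]
    nlinarith [one_le_pow₀ (by norm_num : (1:ℝ) ≤ 2) (n := k)]
  refine ⟨A ^ k, by positivity, ?_⟩
  intro Ω inst μ hμ h hmeas N β q hN hβ hβ2 hq hint hE1 hE2 hEm κ hrec
  haveI := hμ
  have hN1 : (1 : ℝ) ≤ N := by exact_mod_cast hN
  have hN0 : (0 : ℝ) < N := lt_of_lt_of_le one_pos hN1
  have hq1 : 1 ≤ q := by rw [hq]; exact Real.one_le_rpow hN1 hβ.le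
  have hq0 : 0 < q := lt_of_lt_of_le one_pos hq1
  have hq2 : q ^ 2 ≤ N := by
    have e : q ^ 2 = (N : ℝ) ^ (β * 2) := by
      rw [hq, ← Real.rpow_natCast ((N : ℝ) ^ β) 2, ← Real.rpow_mul hN0.le]
      norm_num
    rw [e]
    calc (N : ℝ) ^ (β * 2) ≤ (N : ℝ) ^ (1 : ℝ) :=
          Real.rpow_le_rpow_of_exponent_le hN1 (by linarith)
      _ = N := Real.rpow_one _
  set M : ℕ → ℝ := fun m => ∫ ω, (h ω) ^ m ∂μ with hMdef
  have hM0 : M 0 = 1 := by simp [hMdef]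
  have hM1 : M 1 = 0 := by simp only [hMdef, pow_one]; exact hE1
  have hrec' : ∀ n : ℕ, M (n + 1)
      = ∑ j ∈ Finset.range (n + 1), (n.choose j : ℝ) * κ (j + 1) * M (n - j) := by
    intro n; simp only [hMdef]; exact hrec n
  have hκ1 : κ 1 = 0 := by
    have h0 := hrec' 0
    simp [hM0] at h0
    rw [← h0]; exact hM1.symm ▸ hM1
  have hMb : ∀ m, 2 ≤ m → m ≤ k → |M m| ≤ B / (N * q ^ (m - 2)) := by
    intro m hm2 hmk
    have habs : |M m| ≤ ∫ ω, |h ω| ^ m ∂μ := by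
      have := norm_integral_le_integral_norm (μ := μ) (fun ω => (h ω) ^ m)
      simpa [hMdef, Real.norm_eq_abs, abs_pow] using this
    rcases eq_or_lt_of_le hm2 with hm | hm
    · -- m = 2
      have h2 : ∫ ω, |h ω| ^ m ∂μ ≤ C 2 / N := by
        rw [← hm]
        simpa [sq_abs] using hE2
      have : (m : ℕ) - 2 = 0 := by omega
      rw [this, pow_zero, mul_one]
      calc |M m| ≤ C 2 / N := le_trans habs h2
        _ ≤ B / N := by gcongr; exact hCB 2 hk
    · have hm3 : 3 ≤ m := hm
      calc |M m| ≤ C m / (N * q ^ (m - 2)) := le_trans habs (hEm m hm3)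
        _ ≤ B / (N * q ^ (m - 2)) := by gcongr; exact hCB m hmk
  have main : ∀ m, 2 ≤ m → m ≤ k → |κ m| ≤ A ^ m / (N * q ^ (m - 2)) := by
    intro m
    induction m using Nat.strong_induction_on with
    | _ m IH =>
      intro hm2 hmk
      obtain ⟨n, rfl⟩ : ∃ n, m = n + 1 := ⟨m - 1, by omega⟩
      have hn1 : 1 ≤ n := by omega
      have hδ : κ (n + 1) = M (n + 1)
          - ∑ j ∈ Finset.range n, (n.choose j : ℝ) * κ (j + 1) * M (n - j) := by
        have hr := hrec' n
        rw [Finset.sum_range_succ, Nat.sub_self, hM0, Nat.choose_self] at hr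
        push_cast at hr
        linarith
      have habs : |κ (n + 1)| ≤ |M (n + 1)|
          + ∑ j ∈ Finset.range n, |(n.choose j : ℝ) * κ (j + 1) * M (n - j)| := by
        rw [hδ, sub_eq_add_neg]
        refine le_trans (abs_add_le _ _) ?_
        rw [abs_neg]
        gcongr
        exact Finset.abs_sum_le_sum_abs _ _
      set X : ℝ := A ^ (n - 1) * B / (N * q ^ (n - 1)) with hXdef
      have hX0 : 0 ≤ X := by positivity
      have hterm : ∀ j ∈ Finset.range n,
          |(n.choose j : ℝ) * κ (j + 1) * M (n - j)| ≤ (n.choose j : ℝ) * X := by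
        intro j hj
        rw [Finset.mem_range] at hj
        rcases eq_or_ne j 0 with rfl | hj0
        · simp [hκ1]
          positivity
        rcases eq_or_ne (n - j) 1 with h1 | hne
        · rw [h1, hM1, mul_zero, abs_zero]
          positivity
        · have hj1 : 1 ≤ j := by omega
          have hj2 : j + 2 ≤ n := by omega
          have hIH := IH (j + 1) (by omega) (by omega) (by omega)
          have hMB := hMb (n - j) (by omega) (by omega)
          have key : A ^ (j + 1) / (N * q ^ (j + 1 - 2)) * (B / (N * q ^ (n - j - 2))) ≤ X := by
            rw [hXdef, div_mul_div_comm]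
            apply div_le_div₀ (by positivity) ?_ (by positivity) ?_
            · gcongr
              · omega
            · have e : q ^ (j + 1 - 2) * q ^ (n - j - 2) = q ^ (n - 3) := by
                rw [← pow_add]; congr 1; omega
              have e2 : q ^ (n - 1) = q ^ (n - 3) * q ^ 2 := by
                rw [← pow_add]; congr 1; omega
              calc N * q ^ (n - 1) = N * (q ^ (n - 3) * q ^ 2) := by rw [e2]
                _ ≤ N * (q ^ (n - 3) * N) := by gcongr
                _ = N * q ^ (j + 1 - 2) * (N * q ^ (n - j - 2)) := by rw [← e]; ring
          calc |(n.choose j : ℝ) * κ (j + 1) * M (n - j)|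
              = (n.choose j : ℝ) * |κ (j + 1)| * |M (n - j)| := by
                rw [abs_mul, abs_mul, Nat.abs_cast]
            _ ≤ (n.choose j : ℝ) * (A ^ (j + 1) / (N * q ^ (j + 1 - 2)))
                * (B / (N * q ^ (n - j - 2))) := by
                gcongr
            _ = (n.choose j : ℝ) * (A ^ (j + 1) / (N * q ^ (j + 1 - 2))
                * (B / (N * q ^ (n - j - 2)))) := by ring
            _ ≤ (n.choose j : ℝ) * X := by gcongr
      have hchoose : (∑ j ∈ Finset.range n, (n.choose j : ℝ)) ≤ 2 ^ n := by
        have hnat : ∑ j ∈ Finset.range n, n.choose j ≤ 2 ^ n := by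
          rw [← Nat.sum_range_choose n]
          exact Finset.sum_le_sum_of_subset (Finset.range_subset_range.mpr (by omega))
        exact_mod_cast hnat
      have hsum : ∑ j ∈ Finset.range n, |(n.choose j : ℝ) * κ (j + 1) * M (n - j)|
          ≤ 2 ^ n * X := by
        calc ∑ j ∈ Finset.range n, |(n.choose j : ℝ) * κ (j + 1) * M (n - j)|
            ≤ ∑ j ∈ Finset.range n, (n.choose j : ℝ) * X := Finset.sum_le_sum hterm
          _ = (∑ j ∈ Finset.range n, (n.choose j : ℝ)) * X := by rw [← Finset.sum_mul]
          _ ≤ 2 ^ n * X := by gcongr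
      have hMn : |M (n + 1)| ≤ B / (N * q ^ (n - 1)) := by
        have := hMb (n + 1) hm2 hmk
        have e : n + 1 - 2 = n - 1 := by omega
        rwa [e] at this
      have hnum : B + 2 ^ n * (A ^ (n - 1) * B) ≤ A ^ (n + 1) := by
        have hx : (1 : ℝ) ≤ A ^ (n - 1) := one_le_pow₀ hA1
        have h2n : (1 : ℝ) ≤ 2 ^ n := one_le_pow₀ (by norm_num)
        have h2n1 : (2 : ℝ) ^ (n + 1) ≤ A :=
          le_trans (pow_le_pow_right₀ (by norm_num) (by omega)) h2kA
        have hpow : A ^ (n + 1) = A ^ (n - 1) * A * A := by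
          have e3 : n + 1 = n - 1 + 1 + 1 := by omega
          rw [e3, pow_succ, pow_succ]
        have hone : (1 : ℝ) ≤ 2 ^ n * A ^ (n - 1) := by
          calc (1 : ℝ) = 1 * 1 := by norm_num
            _ ≤ 2 ^ n * A ^ (n - 1) := mul_le_mul h2n hx zero_le_one (by positivity)
        have hBle : B ≤ 2 ^ n * (A ^ (n - 1) * B) := by
          calc B = 1 * B := (one_mul B).symm
            _ ≤ 2 ^ n * A ^ (n - 1) * B := mul_le_mul_of_nonneg_right hone hB0.le
            _ = 2 ^ n * (A ^ (n - 1) * B) := by ring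
        have step1 : B + 2 ^ n * (A ^ (n - 1) * B) ≤ 2 ^ (n + 1) * (A ^ (n - 1) * B) := by
          calc B + 2 ^ n * (A ^ (n - 1) * B)
              ≤ 2 ^ n * (A ^ (n - 1) * B) + 2 ^ n * (A ^ (n - 1) * B) := by linarith
            _ = 2 ^ (n + 1) * (A ^ (n - 1) * B) := by rw [pow_succ]; ring
        have step2 : 2 ^ (n + 1) * (A ^ (n - 1) * B) ≤ A * (A ^ (n - 1) * A) := by
          apply mul_le_mul h2n1 ?_ (by positivity) (by positivity)
          gcongr
        calc B + 2 ^ n * (A ^ (n - 1) * B) ≤ 2 ^ (n + 1) * (A ^ (n - 1) * B) := step1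
          _ ≤ A * (A ^ (n - 1) * A) := step2
          _ = A ^ (n + 1) := by rw [hpow]; ring
      have e : n + 1 - 2 = n - 1 := by omega
      rw [e]
      calc |κ (n + 1)| ≤ |M (n + 1)|
            + ∑ j ∈ Finset.range n, |(n.choose j : ℝ) * κ (j + 1) * M (n - j)| := habs
        _ ≤ B / (N * q ^ (n - 1)) + 2 ^ n * X := by gcongr
        _ = (B + 2 ^ n * (A ^ (n - 1) * B)) / (N * q ^ (n - 1)) := by
            rw [hXdef]; ring
        _ ≤ A ^ (n + 1) / (N * q ^ (n - 1)) := by gcongr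
  exact main k hk le_rfl
end
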